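/- Let n ≥ 1, let Q be an n×n real symmetric positive definite matrix, let m ≥ 4, let a ∈ ℝ, and set a_1 = a_2 = ⋯ = a_m = a. Then the mn×mn block matrix A (with block rows (0, I_n, 0, …, 0), …, (0, …, 0, I_n), (−a Q, −a Q, …, −a Q)) is not stable: there exists an eigenvalue of A over ℂ whose real part is nonnegative. -/

import Mathlib

open Polynomial Complex

/-- The `mn × mn` block matrix of the `m`-th order consensus system: block row
`j` (for `j = 1, …, m−1`) is zero except for `I_n` in block column `j+1`, and
the last block row is `(-a₁Q, -a₂Q, …, -a_mQ)` (here `a : Fin m → ℝ` with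
`a j` the gain `a_{j+1}`). -/
def blockA (m n : ℕ) (a : Fin m → ℝ) (Q : Matrix (Fin n) (Fin n) ℝ) :
    Matrix (Fin m × Fin n) (Fin m × Fin n) ℝ :=
  Matrix.of fun x y =>
    if (x.1 : ℕ) + 1 = m then -(a y.1) * Q x.2 y.2
    else if (y.1 : ℕ) = (x.1 : ℕ) + 1 ∧ x.2 = y.2 then 1 else 0

noncomputable def Complex.abs : AbsoluteValue ℂ ℝ := NormedField.toAbsoluteValue ℂ

lemma Complex.abs_apply (z : ℂ) : Complex.abs z = Real.sqrt (Complex.normSq z) := Complex.norm_def z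

lemma Complex.abs_conj (z : ℂ) : Complex.abs (starRingEnd ℂ z) = Complex.abs z := Complex.norm_conj z

lemma Complex.normSq_eq_abs (z : ℂ) : Complex.normSq z = Complex.abs z ^ 2 :=
  Complex.normSq_eq_norm_sq z

lemma Complex.abs_exp_ofReal_mul_I (x : ℝ) : Complex.abs (Complex.exp (x * Complex.I)) = 1 :=
  Complex.norm_exp_ofReal_mul_I x

namespace HOUnstable

/-- reflection inequality, non-strict -/
lemma normSq_reflect_le {z r : ℂ} (hz : 0 ≤ z.re) (hr : r.re < 0) :
    Complex.abs (-(starRingEnd ℂ z) - r) ≤ Complex.abs (z - r) := by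
  rw [Complex.abs_apply, Complex.abs_apply]
  apply Real.sqrt_le_sqrt
  simp only [Complex.normSq_apply, Complex.sub_re, Complex.sub_im, Complex.neg_re,
    Complex.neg_im, Complex.conj_re, Complex.conj_im]
  nlinarith [mul_nonneg hz (le_of_lt (neg_pos.mpr hr))]

lemma abs_reflect_lt {z r : ℂ} (hz : 0 < z.re) (hr : r.re < 0) :
    Complex.abs (-(starRingEnd ℂ z) - r) < Complex.abs (z - r) := by
  rw [Complex.abs_apply, Complex.abs_apply]
  apply Real.sqrt_lt_sqrt (Complex.normSq_nonneg _)
  simp only [Complex.normSq_apply, Complex.sub_re, Complex.sub_im, Complex.neg_re,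
    Complex.neg_im, Complex.conj_re, Complex.conj_im]
  nlinarith [mul_pos hz (neg_pos.mpr hr)]

/-- strict product inequality over the multiset of roots -/
lemma prod_reflect_lt {s : Multiset ℂ} (hs : s ≠ 0) {z : ℂ} (hz : 0 < z.re)
    (hr : ∀ r ∈ s, r.re < 0) :
    (s.map fun r => Complex.abs (-(starRingEnd ℂ z) - r)).prod <
      (s.map fun r => Complex.abs (z - r)).prod := by
  have hgpos : ∀ r ∈ s, 0 < Complex.abs (z - r) := by
    intro r hrs
    have : z - r ≠ 0 := by
      intro h
      have : z = r := by linear_combination h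
      subst this
      exact absurd hz (not_lt.mpr (hr z hrs).le)
    simpa using (AbsoluteValue.pos Complex.abs this)
  by_cases h0 : ∀ r ∈ s, 0 < Complex.abs (-(starRingEnd ℂ z) - r)
  · exact Multiset.prod_map_lt_prod_map hs _ _ h0 (fun r hrs => abs_reflect_lt hz (hr r hrs))
  · push_neg at h0
    obtain ⟨r0, hr0s, hr0⟩ := h0
    have hzero : Complex.abs (-(starRingEnd ℂ z) - r0) = 0 :=
      le_antisymm hr0 (Complex.abs.nonneg _)
    have h1 : (0:ℝ) ∈ s.map fun r => Complex.abs (-(starRingEnd ℂ z) - r) := by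
      rw [Multiset.mem_map]; exact ⟨r0, hr0s, hzero⟩
    rw [Multiset.prod_eq_zero h1]
    exact Multiset.prod_pos (by
      intro x hx
      rw [Multiset.mem_map] at hx
      obtain ⟨r, hrs, rfl⟩ := hx
      exact hgpos r hrs)

/-- the generic contradiction: a monic complex polynomial whose roots all have
negative real part satisfies `|P(-z̄)| < |P z|` for every `z` with `0 < z.re`. -/
lemma no_left_half (P : ℂ[X]) (hmonic : P.Monic) (hdeg : 0 < P.degree)
    (hroots : ∀ r ∈ P.roots, r.re < 0) {z : ℂ} (hz : 0 < z.re)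
    (hcert : Complex.abs (P.eval z) ≤ Complex.abs (P.eval (-(starRingEnd ℂ z)))) : False := by
  have hsplits : P.Splits := IsAlgClosed.splits P
  have hfact := hsplits.eq_prod_roots_of_monic hmonic
  have habs : ∀ w : ℂ, Complex.abs (P.eval w)
      = (P.roots.map fun r => Complex.abs (w - r)).prod := by
    intro w
    conv_lhs => rw [hfact]
    rw [eval_multiset_prod, Multiset.map_map, ← Multiset.map_map]
    rw [map_multiset_prod Complex.abs]
    congr 1
    rw [Multiset.map_map, Multiset.map_map]
    apply Multiset.map_congr rfl
    intro r _
    simp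
  have hne : P.roots ≠ 0 := by
    obtain ⟨x, hx⟩ := Complex.exists_root hdeg
    intro h
    have : x ∈ P.roots := by
      rw [mem_roots']
      exact ⟨hmonic.ne_zero, hx⟩
    rw [h] at this
    simp at this
  have := prod_reflect_lt hne hz hroots
  rw [← habs, ← habs] at this
  exact absurd hcert (not_le.mpr this)


lemma unity_facts (N : ℕ) (hN : 5 ≤ N) :
    ∃ z : ℂ, z ^ N = 1 ∧ 0 < z.re ∧ 0 < z.im ∧ Complex.abs z = 1 := by
  have hπ := Real.pi_pos
  have hN0 : (0:ℝ) < N := by positivity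
  set θ : ℝ := 2 * Real.pi / N with hθ
  have hθpos : 0 < θ := by positivity
  have hθle : θ ≤ 2 * Real.pi / 5 := by
    apply div_le_div_of_nonneg_left (by positivity) (by norm_num) ?_
    exact_mod_cast hN
  have hθlt : θ < Real.pi / 2 := lt_of_le_of_lt hθle (by linarith)
  refine ⟨Complex.exp (θ * Complex.I), ?_, ?_, ?_, ?_⟩
  · rw [← Complex.exp_nat_mul]
    have : (N:ℂ) * ((θ:ℝ) * Complex.I) = 2 * (Real.pi:ℂ) * Complex.I := by
      have hNne : (N:ℂ) ≠ 0 := by exact_mod_cast ne_of_gt hN0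
      rw [hθ]
      push_cast
      field_simp
    rw [this, Complex.exp_two_pi_mul_I]
  · rw [Complex.exp_ofReal_mul_I_re]
    exact Real.cos_pos_of_mem_Ioo ⟨by linarith, hθlt⟩
  · rw [Complex.exp_ofReal_mul_I_im]
    exact Real.sin_pos_of_pos_of_lt_pi hθpos (by linarith)
  · exact Complex.abs_exp_ofReal_mul_I θ

lemma cert_even (m : ℕ) (hm6 : 6 ≤ m) (hme : Even m) (c : ℝ) :
    ∃ z : ℂ, 0 < z.re ∧
      Complex.abs (z ^ m + (c:ℂ) * ∑ k ∈ Finset.range m, z ^ k) ≤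
      Complex.abs ((-(starRingEnd ℂ z)) ^ m
        + (c:ℂ) * ∑ k ∈ Finset.range m, (-(starRingEnd ℂ z)) ^ k) := by
  obtain ⟨z, hzpow, hzre, hzim, hzabs⟩ := unity_facts m (by omega)
  refine ⟨z, hzre, ?_⟩
  have hz1 : z ≠ 1 := fun h => by simp [h] at hzim
  set w : ℂ := -(starRingEnd ℂ z) with hw
  have hwim : w.im = z.im := by simp [hw]
  have hw1 : w ≠ 1 := fun h => by rw [h] at hwim; simp at hwim; rw [← hwim] at hzim; simp at hzim
  have hwpow : w ^ m = 1 := by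
    rw [hw, hme.neg_pow, ← map_pow, hzpow, map_one]
  have hSz : (∑ k ∈ Finset.range m, z ^ k) = 0 := by
    have h := geom_sum_mul z m
    rw [hzpow, sub_self] at h
    exact (mul_eq_zero.mp h).resolve_right (sub_ne_zero.mpr hz1)
  have hSw : (∑ k ∈ Finset.range m, w ^ k) = 0 := by
    have h := geom_sum_mul w m
    rw [hwpow, sub_self] at h
    exact (mul_eq_zero.mp h).resolve_right (sub_ne_zero.mpr hw1)
  rw [hSz, hSw, hzpow, hwpow]

lemma cert_odd (m : ℕ) (hm : 4 ≤ m) (hmo : Odd m) (c : ℝ) :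
    ∃ z : ℂ, 0 < z.re ∧
      Complex.abs (z ^ m + (c:ℂ) * ∑ k ∈ Finset.range m, z ^ k) ≤
      Complex.abs ((-(starRingEnd ℂ z)) ^ m
        + (c:ℂ) * ∑ k ∈ Finset.range m, (-(starRingEnd ℂ z)) ^ k) := by
  obtain ⟨z, hzpow, hzre, hzim, hzabs⟩ := unity_facts (m+1) (by omega)
  refine ⟨z, hzre, ?_⟩
  have hz1 : z ≠ 1 := fun h => by simp [h] at hzim
  have hzm1 : z ≠ -1 := fun h => by simp [h] at hzim
  have hz0 : z ≠ 0 := fun h => by simp [h] at hzabs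
  have hzconj : z * starRingEnd ℂ z = 1 := by
    rw [Complex.mul_conj]
    norm_cast
    rw [Complex.normSq_eq_abs, hzabs]
    norm_num
  have hzm : z ^ m = starRingEnd ℂ z := by
    have h1 : z ^ m * z = starRingEnd ℂ z * z := by
      rw [← pow_succ, hzpow, mul_comm]
      exact hzconj.symm
    exact mul_right_cancel₀ hz0 h1
  set w : ℂ := -(starRingEnd ℂ z) with hw
  have hwim : w.im = z.im := by simp [hw]
  have hw1 : w ≠ 1 := fun h => by rw [h] at hwim; simp at hwim; rw [← hwim] at hzim; simp at hzim
  have hwm : w ^ m = -z := by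
    rw [hw, hmo.neg_pow, ← map_pow, hzm, Complex.conj_conj]
  have hwpow : w ^ (m+1) = 1 := by
    rw [pow_succ, hwm, hw]
    rw [neg_mul_neg]
    linear_combination hzconj
  have habsE : Complex.abs (z ^ m + (c:ℂ) * ∑ k ∈ Finset.range m, z ^ k)
      = Complex.abs ((c:ℂ) - 1) := by
    have hSz := geom_sum_mul z m
    have hEz : (z ^ m + (c:ℂ) * ∑ k ∈ Finset.range m, z ^ k) * (z - 1)
        = ((c:ℂ) - 1) * (z ^ m - 1) := by
      linear_combination (c:ℂ) * hSz + hzpow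
    have habs := congrArg Complex.abs hEz
    rw [map_mul, map_mul] at habs
    have h2 : Complex.abs (z ^ m - 1) = Complex.abs (z - 1) := by
      have he : z ^ m - 1 = starRingEnd ℂ (z - 1) := by rw [map_sub, map_one, hzm]
      rw [he, Complex.abs_conj]
    rw [h2] at habs
    exact mul_right_cancel₀ (Complex.abs.ne_zero (sub_ne_zero.mpr hz1)) habs
  have habsW : Complex.abs (w ^ m + (c:ℂ) * ∑ k ∈ Finset.range m, w ^ k)
      = Complex.abs ((c:ℂ) - 1) := by
    have hSw := geom_sum_mul w m
    have hEw : (w ^ m + (c:ℂ) * ∑ k ∈ Finset.range m, w ^ k) * (w - 1)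
        = ((c:ℂ) - 1) * (w ^ m - 1) := by
      linear_combination (c:ℂ) * hSw + hwpow
    have habs := congrArg Complex.abs hEw
    rw [map_mul, map_mul] at habs
    have h2 : Complex.abs (w ^ m - 1) = Complex.abs (z + 1) := by
      rw [hwm]
      have : -z - 1 = -(z+1) := by ring
      rw [this, map_neg_eq_map]
    have h3 : Complex.abs (w - 1) = Complex.abs (z + 1) := by
      have : w - 1 = -(starRingEnd ℂ (z + 1)) := by rw [hw, map_add, map_one]; ring
      rw [this, map_neg_eq_map, Complex.abs_conj]
    rw [h2, h3] at habs
    exact mul_right_cancel₀ (Complex.abs.ne_zero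
      (show z + 1 ≠ 0 from fun h => hzm1 (by linear_combination h))) habs
  rw [habsE, habsW]


lemma abs_le_abs_of_normSq {u v : ℂ} (h : Complex.normSq u ≤ Complex.normSq v) :
    Complex.abs u ≤ Complex.abs v := by
  rw [Complex.abs_apply, Complex.abs_apply]
  exact Real.sqrt_le_sqrt h

lemma cert4_small (c : ℝ) (hc0 : 0 < c) (hc2 : c ≤ 2) :
    ∃ z : ℂ, 0 < z.re ∧
      Complex.abs (z ^ 4 + (c:ℂ) * ∑ k ∈ Finset.range 4, z ^ k) ≤
      Complex.abs ((-(starRingEnd ℂ z)) ^ 4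
        + (c:ℂ) * ∑ k ∈ Finset.range 4, (-(starRingEnd ℂ z)) ^ k) := by
  refine ⟨((1/10 : ℝ):ℂ) + ((9/10 : ℝ):ℂ) * Complex.I, by simp, ?_⟩
  apply abs_le_abs_of_normSq
  simp only [Finset.sum_range_succ, Finset.sum_range_zero, Complex.normSq_apply,
    pow_succ, pow_zero, one_mul, Complex.add_re, Complex.add_im, Complex.mul_re,
    Complex.mul_im, Complex.neg_re, Complex.neg_im, Complex.conj_re, Complex.conj_im,
    Complex.ofReal_re, Complex.ofReal_im, Complex.I_re, Complex.I_im, Complex.one_re,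
    Complex.one_im, Complex.zero_re, Complex.zero_im, zero_add, add_zero, mul_zero,
    zero_mul, mul_one, sub_zero, zero_sub, neg_zero, neg_neg]
  ring_nf
  nlinarith [mul_nonneg hc0.le (by linarith : (0:ℝ) ≤ 2 - c)]

lemma cert4_big (c : ℝ) (hc : 2 ≤ c) :
    ∃ z : ℂ, 0 < z.re ∧
      Complex.abs (z ^ 4 + (c:ℂ) * ∑ k ∈ Finset.range 4, z ^ k) ≤
      Complex.abs ((-(starRingEnd ℂ z)) ^ 4
        + (c:ℂ) * ∑ k ∈ Finset.range 4, (-(starRingEnd ℂ z)) ^ k) := by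
  have hc0 : 0 < c := by linarith
  set t : ℝ := (4*c)⁻¹ with htdef
  have ht : 0 < t := by positivity
  have h4ct : c * t = 1/4 := by rw [htdef]; field_simp
  have ht8 : t ≤ 1/8 := by
    rw [htdef]
    rw [show (1:ℝ)/8 = (8:ℝ)⁻¹ by norm_num]
    exact inv_anti₀ (by norm_num) (by linarith)
  refine ⟨(t:ℂ) + ((1+t : ℝ):ℂ) * Complex.I, by simpa using ht, ?_⟩
  apply abs_le_abs_of_normSq
  have e2 : c^2*t^3 = t/16 := by linear_combination (c*t + 1/4)*t*h4ct
  have e3 : c*t^2 = t/4 := by linear_combination t*h4ct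
  have e4 : c*t^3 = t^2/4 := by linear_combination t^2*h4ct
  have e5 : c*t^4 = t^3/4 := by linear_combination t^3*h4ct
  have e6 : c*t^5 = t^4/4 := by linear_combination t^4*h4ct
  have e7 : c*t^6 = t^5/4 := by linear_combination t^5*h4ct
  have e8 : c*t^7 = t^6/4 := by linear_combination t^6*h4ct
  have e9 : c^2*t^4 = t^2/16 := by linear_combination (c*t + 1/4)*t^2*h4ct
  have e10 : c^2*t^5 = t^3/16 := by linear_combination (c*t + 1/4)*t^3*h4ct
  have p3 : t^3 ≤ (1/8:ℝ)^3 := pow_le_pow_left₀ ht.le ht8 3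
  have p4 : t^4 ≤ (1/8:ℝ)^4 := pow_le_pow_left₀ ht.le ht8 4
  have p5 : t^5 ≤ (1/8:ℝ)^5 := pow_le_pow_left₀ ht.le ht8 5
  have p6 : t^6 ≤ (1/8:ℝ)^6 := pow_le_pow_left₀ ht.le ht8 6
  simp only [Finset.sum_range_succ, Finset.sum_range_zero, Complex.normSq_apply,
    pow_succ, pow_zero, one_mul, Complex.add_re, Complex.add_im, Complex.mul_re,
    Complex.mul_im, Complex.neg_re, Complex.neg_im, Complex.conj_re, Complex.conj_im,
    Complex.ofReal_re, Complex.ofReal_im, Complex.I_re, Complex.I_im, Complex.one_re,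
    Complex.one_im, Complex.zero_re, Complex.zero_im, zero_add, add_zero, mul_zero,
    zero_mul, mul_one, sub_zero, zero_sub, neg_zero, neg_neg]
  nlinarith [e2,e3,e4,e5,e6,e7,e8,e9,e10,p3,p4,p5,p6,ht]


/-- main root existence: for any real `c` and `m ≥ 4`, the polynomial
`μ^m + c(μ^{m-1}+⋯+1)` has a complex root with nonnegative real part. -/
lemma exists_root_re_nonneg (m : ℕ) (hm : 4 ≤ m) (c : ℝ) :
    ∃ μ : ℂ, μ ^ m + (c:ℂ) * ∑ k ∈ Finset.range m, μ ^ k = 0 ∧ 0 ≤ μ.re := by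
  rcases le_or_gt c 0 with hc | hc
  · -- real root via intermediate value theorem
    set f : ℝ → ℝ := fun t => t ^ m + c * ∑ k ∈ Finset.range m, t ^ k with hf
    have hcont : Continuous f := by
      apply (continuous_pow m).add
      exact continuous_const.mul (continuous_finset_sum _ fun k _ => continuous_pow k)
    obtain ⟨m', rfl⟩ : ∃ m', m = m' + 1 := ⟨m - 1, by omega⟩
    have hf0 : f 0 = c := by
      simp [hf, Finset.sum_range_succ', zero_pow, Nat.succ_ne_zero]
    set T : ℝ := 1 - (m' + 1 : ℝ) * c with hT
    have hT1 : (1:ℝ) ≤ T := by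
      rw [hT]
      nlinarith [mul_nonneg (by positivity : (0:ℝ) ≤ (m' + 1 : ℝ)) (neg_nonneg.mpr hc)]
    have hfT : 0 < f T := by
      have hsum : ∑ k ∈ Finset.range (m' + 1), T ^ k ≤ (m' + 1 : ℝ) * T ^ m' := by
        calc ∑ k ∈ Finset.range (m' + 1), T ^ k
            ≤ ∑ _k ∈ Finset.range (m' + 1), T ^ m' := by
              apply Finset.sum_le_sum
              intro k hk
              exact pow_le_pow_right₀ hT1 (by have := Finset.mem_range.mp hk; omega)
          _ = (m' + 1 : ℝ) * T ^ m' := by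
              rw [Finset.sum_const, Finset.card_range]; push_cast; ring
      have hTm : T ^ (m' + 1) = T ^ m' * T := by rw [pow_succ]
      have hTpos : (0:ℝ) < T ^ m' := by positivity
      have h1 : c * ∑ k ∈ Finset.range (m' + 1), T ^ k ≥ c * ((m' + 1 : ℝ) * T ^ m') :=
        mul_le_mul_of_nonpos_left hsum hc
      have : f T ≥ T ^ m' * T + c * ((m' + 1 : ℝ) * T ^ m') := by
        rw [hf]; dsimp only; rw [hTm]; linarith
      have h2 : T ^ m' * T + c * ((m' + 1 : ℝ) * T ^ m') = T ^ m' := by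
        rw [hT]; ring
      linarith [this, h2 ▸ this, hTpos]
    have h0mem : (0:ℝ) ∈ Set.Icc (f 0) (f T) := ⟨by rw [hf0]; exact hc, hfT.le⟩
    obtain ⟨t, ht, hft⟩ := intermediate_value_Icc (by linarith : (0:ℝ) ≤ T)
      hcont.continuousOn h0mem
    refine ⟨(t:ℂ), ?_, by simpa using ht.1⟩
    have : ((f t : ℝ) : ℂ) = 0 := by rw [hft]; norm_num
    rw [hf] at this
    push_cast at this
    convert this using 2
  · -- c > 0 : contradiction via the reflection certificates
    by_contra hcon
    push_neg at hcon
    set P : ℂ[X] := X ^ m + C (c:ℂ) * ∑ k ∈ Finset.range m, X ^ k with hP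
    have hSdeg : (∑ k ∈ Finset.range m, (X:ℂ[X]) ^ k).degree < (m:ℕ) := by
      apply lt_of_le_of_lt (Polynomial.degree_sum_le _ _)
      rw [Finset.sup_lt_iff (by exact_mod_cast WithBot.bot_lt_coe m)]
      intro k hk
      rw [Polynomial.degree_X_pow]
      exact_mod_cast Finset.mem_range.mp hk
    have hCSdeg : (C (c:ℂ) * ∑ k ∈ Finset.range m, (X:ℂ[X]) ^ k).degree < (m:ℕ) := by
      apply lt_of_le_of_lt (Polynomial.degree_mul_le _ _)
      calc (C (c:ℂ)).degree + (∑ k ∈ Finset.range m, (X:ℂ[X]) ^ k).degree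
          ≤ 0 + (∑ k ∈ Finset.range m, (X:ℂ[X]) ^ k).degree :=
            add_le_add Polynomial.degree_C_le le_rfl
        _ = (∑ k ∈ Finset.range m, (X:ℂ[X]) ^ k).degree := by rw [zero_add]
        _ < (m:ℕ) := hSdeg
    have hmonic : P.Monic := by
      rw [hP]; exact Polynomial.monic_X_pow_add (by simpa using hCSdeg)
    have hdeg : P.degree = (m:ℕ) := by
      rw [hP, Polynomial.degree_add_eq_left_of_degree_lt
        (by rw [Polynomial.degree_X_pow]; exact hCSdeg), Polynomial.degree_X_pow]
    have heval : ∀ w : ℂ, P.eval w = w ^ m + (c:ℂ) * ∑ k ∈ Finset.range m, w ^ k := by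
      intro w
      simp [hP, Polynomial.eval_finset_sum]
    have hroots : ∀ r ∈ P.roots, r.re < 0 := by
      intro r hr
      have h0 := Polynomial.isRoot_of_mem_roots hr
      rw [Polynomial.IsRoot, heval] at h0
      exact hcon r h0
    have hdegpos : 0 < P.degree := by rw [hdeg]; exact_mod_cast by omega
    obtain ⟨z, hzre, hcert⟩ :
        ∃ z : ℂ, 0 < z.re ∧
          Complex.abs (z ^ m + (c:ℂ) * ∑ k ∈ Finset.range m, z ^ k) ≤
          Complex.abs ((-(starRingEnd ℂ z)) ^ m
            + (c:ℂ) * ∑ k ∈ Finset.range m, (-(starRingEnd ℂ z)) ^ k) := by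
      rcases Nat.even_or_odd m with he | ho
      · rcases eq_or_ne m 4 with rfl | hne
        · rcases le_or_gt c 2 with h2 | h2
          · exact cert4_small c hc h2
          · exact cert4_big c h2.le
        · have : 6 ≤ m := by
            rcases he with ⟨j, hj⟩
            omega
          exact cert_even m this he c
      · exact cert_odd m hm ho c
    exact no_left_half P hmonic hdegpos hroots hzre
      (by rw [heval, heval]; exact hcert)


lemma charpoly_eval_zero (m n : ℕ) (hm : 1 ≤ m) (a : ℝ) (Q : Matrix (Fin n) (Fin n) ℝ)
    (ev : ℝ) (v : Fin n → ℝ) (hv : v ≠ 0) (hQv : Q.mulVec v = ev • v) (μ : ℂ)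
    (hμ : μ ^ m + ((a * ev : ℝ):ℂ) * ∑ k ∈ Finset.range m, μ ^ k = 0) :
    (((blockA m n (fun _ => a) Q).map Complex.ofReal).charpoly).eval μ = 0 := by
  classical
  set A := (blockA m n (fun _ => a) Q).map Complex.ofReal with hA
  set x : Fin m × Fin n → ℂ := fun p => μ ^ (p.1 : ℕ) * (v p.2 : ℂ) with hx
  obtain ⟨i1, hi1⟩ : ∃ i, v i ≠ 0 := Function.ne_iff.mp hv
  have hx0 : x ≠ 0 := by
    intro h
    apply hi1
    have := congrFun h (⟨0, by omega⟩, i1)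
    simp [hx] at this
    exact_mod_cast this
  have hQvi : ∀ i, ∑ l, (Q i l : ℂ) * (v l : ℂ) = (ev : ℂ) * (v i : ℂ) := by
    intro i
    have h1 : (Q.mulVec v) i = ev * v i := by rw [hQv]; simp
    have h2 : ∑ l, Q i l * v l = ev * v i := by
      rw [← h1]; rfl
    calc ∑ l, (Q i l : ℂ) * (v l : ℂ) = ((∑ l, Q i l * v l : ℝ) : ℂ) := by push_cast; rfl
      _ = (ev : ℂ) * (v i : ℂ) := by rw [h2]; push_cast; rfl
  have hAx : A.mulVec x = μ • x := by
    funext p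
    obtain ⟨j, i⟩ := p
    show ∑ q : Fin m × Fin n, A (j, i) q * x q = μ * x (j, i)
    by_cases hj : (j:ℕ) + 1 = m
    · have hentry : ∀ q : Fin m × Fin n, A (j, i) q = ((-a * Q i q.2 : ℝ) : ℂ) := by
        intro q
        simp [hA, blockA, Matrix.map_apply, hj]
      calc ∑ q : Fin m × Fin n, A (j, i) q * x q
          = ∑ k : Fin m, ∑ l : Fin n, ((-a * Q i l : ℝ):ℂ) * (μ ^ (k:ℕ) * (v l : ℂ)) := by
            rw [Fintype.sum_prod_type]
            exact Finset.sum_congr rfl fun k _ => Finset.sum_congr rfl fun l _ => by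
              rw [hentry (k, l)]
        _ = ∑ k : Fin m, μ ^ (k:ℕ) * ((-a:ℂ) * ∑ l : Fin n, (Q i l : ℂ) * (v l : ℂ)) := by
            apply Finset.sum_congr rfl
            intro k _
            simp only [Finset.mul_sum]
            apply Finset.sum_congr rfl
            intro l _
            push_cast
            ring
        _ = (∑ k ∈ Finset.range m, μ ^ k) * ((-a:ℂ) * ((ev:ℂ) * (v i : ℂ))) := by
            rw [← Finset.sum_mul, Fin.sum_univ_eq_sum_range (fun k => μ ^ k)]
            rw [hQvi i]
        _ = μ * x (j, i) := by
            have hxji : x (j, i) = μ ^ (j:ℕ) * (v i : ℂ) := rfl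
            have hpow : μ * μ ^ (j:ℕ) = μ ^ m := by
              have h1 : μ ^ m = μ ^ ((j:ℕ)+1) := congrArg (fun t => μ ^ t) hj.symm
              rw [h1, pow_succ]; ring
            rw [hxji]
            push_cast at hμ ⊢
            have : μ ^ m = -((a:ℂ) * (ev:ℂ)) * ∑ k ∈ Finset.range m, μ ^ k := by
              linear_combination hμ
            calc (∑ k ∈ Finset.range m, μ ^ k) * ((-a:ℂ) * ((ev:ℂ) * (v i : ℂ)))
                = (-((a:ℂ) * (ev:ℂ)) * ∑ k ∈ Finset.range m, μ ^ k) * (v i : ℂ) := by ring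
              _ = μ ^ m * (v i : ℂ) := by rw [← this]
              _ = μ * (μ ^ (j:ℕ) * (v i : ℂ)) := by rw [← hpow]; ring
    · have hjlt : (j:ℕ) + 1 < m := by
        have := j.isLt
        omega
      set k0 : Fin m := ⟨(j:ℕ) + 1, hjlt⟩ with hk0
      have hentry : ∀ q : Fin m × Fin n,
          A (j, i) q * x q = if q = (k0, i) then x q else 0 := by
        intro q
        obtain ⟨k, l⟩ := q
        have : A (j, i) (k, l)
            = if (k:ℕ) = (j:ℕ) + 1 ∧ i = l then (1:ℂ) else 0 := by
          simp only [hA, Matrix.map_apply, blockA, Matrix.of_apply, hj, if_false]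
          split_ifs <;> simp
        rw [this]
        by_cases hq : (k, l) = (k0, i)
        · rw [if_pos hq]
          have hk : k = k0 := (Prod.ext_iff.mp hq).1
          have hl : l = i := (Prod.ext_iff.mp hq).2
          rw [if_pos ⟨by rw [hk], hl.symm⟩, one_mul]
        · rw [if_neg hq, if_neg, zero_mul]
          intro ⟨h1, h2⟩
          apply hq
          exact Prod.ext_iff.mpr ⟨Fin.ext h1, h2.symm⟩
      calc ∑ q : Fin m × Fin n, A (j, i) q * x q
          = ∑ q : Fin m × Fin n, if q = (k0, i) then x q else 0 :=
            Finset.sum_congr rfl fun q _ => hentry q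
        _ = x (k0, i) := by
            rw [Finset.sum_ite_eq' Finset.univ (k0, i) x, if_pos (Finset.mem_univ _)]
        _ = μ * x (j, i) := by
            show μ ^ ((j:ℕ)+1) * (v i : ℂ) = μ * (μ ^ (j:ℕ) * (v i : ℂ))
            rw [pow_succ]; ring
  have h1 : (A.charpoly).eval μ = (Matrix.scalar (Fin m × Fin n) μ - A).det := by
    rw [Matrix.charpoly, eval_det, Matrix.matPolyEquiv_charmatrix]
    simp
  rw [h1]
  rw [← Matrix.exists_mulVec_eq_zero_iff]
  refine ⟨x, hx0, ?_⟩
  rw [Matrix.sub_mulVec, hAx]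
  have : (Matrix.scalar (Fin m × Fin n) μ).mulVec x = μ • x := by
    funext p
    simp [Matrix.scalar_apply, Matrix.mulVec_diagonal]
  rw [this, sub_self]

end HOUnstable

theorem higherOrder_equalGains_unstable (m n : ℕ) (hm : 4 ≤ m) (hn : 1 ≤ n)
    (Q : Matrix (Fin n) (Fin n) ℝ) (hQ : Q.PosDef) (a : ℝ) :
    ∃ μ ∈ (((blockA m n (fun _ => a) Q).map
        Complex.ofReal).charpoly).roots, 0 ≤ μ.re := by
  classical
  have hherm : Q.IsHermitian := hQ.1
  set i0 : Fin n := ⟨0, hn⟩ with hi0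
  set ev := hherm.eigenvalues i0 with hev
  have hevpos : 0 < ev := hQ.eigenvalues_pos i0
  set v : Fin n → ℝ := ⇑(hherm.eigenvectorBasis i0) with hv
  have hQv : Q.mulVec v = ev • v := hherm.mulVec_eigenvectorBasis i0
  have hvne : v ≠ 0 := by
    have h := hherm.eigenvectorBasis.orthonormal.ne_zero i0
    intro hzero
    apply h
    ext l
    exact congrFun hzero l
  obtain ⟨μ, hμ, hμre⟩ := HOUnstable.exists_root_re_nonneg m hm (a * ev)
  refine ⟨μ, ?_, hμre⟩
  rw [Polynomial.mem_roots']
  refine ⟨(Matrix.charpoly_monic _).ne_zero, ?_⟩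
  exact HOUnstable.charpoly_eval_zero m n (by omega) a Q ev v hvne hQv μ hμ
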